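/- The bounding number 𝔟 is less than or equal to the reaping number 𝔯. -/
import Mathlib


open Set Filter Cardinal

/-- `a ⊆* b` : `a` is almost contained in `b` (mod finite). -/
def almostLE (a b : Set ℕ) : Prop := (a \ b).Finite

/-- `f <* g` : eventual domination mod finite. -/
def domLT (f g : ℕ → ℕ) : Prop := {k | g k ≤ f k}.Finite

/-- The bounding number 𝔟. -/
noncomputable def bNum : Cardinal :=
  sInf { c | ∃ F : Set (ℕ → ℕ), Cardinal.mk F = c ∧ ∀ g : ℕ → ℕ, ∃ f ∈ F, ¬ domLT f g }

/-- The dominating number 𝔡. -/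
noncomputable def dNum : Cardinal :=
  sInf { c | ∃ F : Set (ℕ → ℕ), Cardinal.mk F = c ∧ ∀ g : ℕ → ℕ, ∃ f ∈ F, domLT g f }

/-- `c` reaps the family `A`. -/
def Reaps (c : Set ℕ) (A : Set (Set ℕ)) : Prop :=
  ∀ a ∈ A, (a ∩ c).Infinite ∧ (a \ c).Infinite

/-- The reaping number 𝔯. -/
noncomputable def rNum : Cardinal :=
  sInf { c | ∃ A : Set (Set ℕ), Cardinal.mk A = c ∧ (∀ a ∈ A, a.Infinite) ∧
    ∀ d : Set ℕ, ¬ Reaps d A }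

/-- The splitting number 𝔰. -/
noncomputable def sNum : Cardinal :=
  sInf { c | ∃ A : Set (Set ℕ), Cardinal.mk A = c ∧ ∀ b : Set ℕ, b.Infinite →
    ∃ a ∈ A, (b ∩ a).Infinite ∧ (b \ a).Infinite }

/-- `next(a,k)`, the least element of `a` above `k`. -/
noncomputable def nxt (a : Set ℕ) (k : ℕ) : ℕ := sInf {n | n ∈ a ∧ k < n}

/-- ℕ*, the Stone–Čech remainder, realized as the space of free ultrafilters on ℕ. -/
abbrev NStar : Type := {x : Ultrafilter ℕ // (Filter.cofinite : Filter ℕ) ≤ ↑x}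

/-- For `a ⊆ ℕ`, the basic clopen set `a*` of free ultrafilters containing `a`. -/
def setStar (a : Set ℕ) : Set NStar := {x | a ∈ x.1}

/-- The ideal `I_A = { a ⊆ ℕ : a* ⊆ A }`. -/
def idealOf (A : Set NStar) : Set (Set ℕ) := {a | setStar a ⊆ A}

/-- `A` is almost clopen: the closure of an open set with a unique boundary point. -/
def AlmostClopen (A : Set NStar) : Prop :=
  (∃ U : Set NStar, IsOpen U ∧ A = closure U) ∧ ∃! x : NStar, x ∈ frontier A

/-- `x` is a tie-point as witnessed by the closed sets `A`, `B`. -/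
def TiePoint {X : Type*} [TopologicalSpace X] (x : X) (A B : Set X) : Prop :=
  IsClosed A ∧ IsClosed B ∧ A ∪ B = Set.univ ∧ A ∩ B = {x} ∧
    x ∈ closure (A \ {x}) ∧ x ∈ closure (B \ {x})

/-- An almost clopen set `A` is simple of type `κ`: `I_A` has a strictly ⊆*-increasing,
⊆*-cofinal chain of order type `κ`. -/
def SimpleType (A : Set NStar) (κ : Cardinal) : Prop :=
  ∃ a : Ordinal → Set ℕ,
    (∀ α, α < κ.ord → a α ∈ idealOf A) ∧
    (∀ α β, α < β → β < κ.ord → almostLE (a α) (a β) ∧ (a β \ a α).Infinite) ∧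
    (∀ c ∈ idealOf A, ∃ α, α < κ.ord ∧ almostLE c (a α))

/-- The family `A` converges to the ultrafilter `x`. -/
def Converges (A : Set (Set ℕ)) (x : Ultrafilter ℕ) : Prop :=
  ∀ U ∈ x, Cardinal.mk {a : Set ℕ // a ∈ A ∧ (a \ U).Infinite} < Cardinal.mk A

/-- `A` is hereditarily unreapable. -/
def HeredUnreapable (A : Set (Set ℕ)) : Prop :=
  ∀ B ⊆ A, (∃ c : Set ℕ, Reaps c B) → Cardinal.mk B < Cardinal.mk A

/-- `f <_x g` for an ultrafilter `x`. -/
def ultLT (x : Ultrafilter ℕ) (f g : ℕ → ℕ) : Prop := {n | f n < g n} ∈ x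

/-- A fixed `<*`-increasing `<*`-unbounded family `{f_ξ : ξ < 𝔟}` of strictly increasing
functions. -/
def UnbddChain (f : Ordinal → ℕ → ℕ) : Prop :=
  (∀ ξ, ξ < bNum.ord → StrictMono (f ξ)) ∧
  (∀ η ξ, η < ξ → ξ < bNum.ord → domLT (f η) (f ξ)) ∧
  (∀ g : ℕ → ℕ, ∃ ξ, ξ < bNum.ord ∧ ¬ domLT (f ξ) g)

/-- `x` is an almost `P_λ`-point. -/
def AlmostPPoint (x : Ultrafilter ℕ) (lam : Cardinal) : Prop :=
  ∀ F : Set (Set ℕ), (∀ U ∈ F, U ∈ x) → Cardinal.mk F < lam →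
    ∃ p : Set ℕ, p.Infinite ∧ ∀ U ∈ F, almostLE p U

lemma my_nxt_spec {a : Set ℕ} (ha : a.Infinite) (k : ℕ) : nxt a k ∈ a ∧ k < nxt a k := by
  have hne : {n | n ∈ a ∧ k < n}.Nonempty := by
    obtain ⟨b, hb, hk⟩ := ha.exists_gt k
    exact ⟨b, hb, hk⟩
  exact Nat.sInf_mem hne

theorem stmt4 : bNum ≤ rNum := by
  apply le_csInf
  · -- the defining set of rNum is nonempty
    refine ⟨Cardinal.mk {a : Set ℕ | a.Infinite}, {a : Set ℕ | a.Infinite}, rfl,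
      fun a ha => ha, ?_⟩
    intro d hr
    by_cases hd : d.Infinite
    · have := (hr d hd).2
      rw [Set.diff_self] at this
      exact this Set.finite_empty
    · have hdc : (dᶜ : Set ℕ).Infinite := (Set.not_infinite.mp hd).infinite_compl
      have := (hr dᶜ hdc).1
      rw [Set.compl_inter_self] at this
      exact this Set.finite_empty
  · rintro c ⟨A, hmk, hinf, hunreap⟩
    set F : Set (ℕ → ℕ) := (fun a : Set ℕ => fun k => nxt a k) '' A with hFdef
    have hF : ∀ g : ℕ → ℕ, ∃ f ∈ F, ¬ domLT f g := by
      intro g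
      by_contra hcon
      push_neg at hcon
      -- build a reaping set from g
      set h : ℕ → ℕ := fun k => max (g k) k + 1 with hh
      set K : ℕ → ℕ := fun n => h^[n] 0 with hKdef
      have hKsucc : ∀ n, K (n + 1) = h (K n) := by
        intro n
        simp only [hKdef, Function.iterate_succ_apply']
      have hKmono : StrictMono K := by
        apply strictMono_nat_of_lt_succ
        intro n
        rw [hKsucc]
        simp only [hh]
        omega
      have hKge : ∀ n, n ≤ K n := fun n => hKmono.le_apply
      have hKg : ∀ n, g (K n) < K (n + 1) := by
        intro n
        rw [hKsucc]
        simp only [hh]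
        omega
      set d : Set ℕ := ⋃ n, Set.Ico (K (2 * n)) (K (2 * n + 1)) with hd
      apply hunreap d
      intro a ha
      have hainf : a.Infinite := hinf a ha
      have hdom : domLT (fun k => nxt a k) g := hcon _ ⟨a, ha, rfl⟩
      obtain ⟨N, hN⟩ : ∃ N, ∀ m, N < m → nxt a m < g m := by
        obtain ⟨N, hN⟩ := hdom.bddAbove
        refine ⟨N, fun m hm => ?_⟩
        by_contra hcon2
        exact absurd (hN (show m ∈ {k | g k ≤ (fun k => nxt a k) k} by
          simpa using Nat.le_of_not_lt hcon2)) (by omega)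
      constructor
      · -- a ∩ d is infinite
        apply Set.infinite_of_forall_exists_gt
        intro b
        set n := max b N + 1 with hn
        have hKbig : max b N < K (2 * n) := lt_of_lt_of_le (by omega) (hKge (2 * n))
        obtain ⟨hmem, hlt⟩ := my_nxt_spec hainf (K (2 * n))
        refine ⟨nxt a (K (2 * n)), ⟨hmem, ?_⟩, by omega⟩
        apply Set.mem_iUnion.mpr ⟨n, ?_⟩
        constructor
        · omega
        · exact lt_trans (hN _ (by omega)) (hKg (2 * n))
      · -- a \ d is infinite
        apply Set.infinite_of_forall_exists_gt
        intro b
        set n := max b N + 1 with hn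
        have hKbig : max b N < K (2 * n + 1) := lt_of_lt_of_le (by omega) (hKge (2 * n + 1))
        obtain ⟨hmem, hlt⟩ := my_nxt_spec hainf (K (2 * n + 1))
        have hup : nxt a (K (2 * n + 1)) < K (2 * n + 2) :=
          lt_trans (hN _ (by omega)) (hKg (2 * n + 1))
        refine ⟨nxt a (K (2 * n + 1)), ⟨hmem, ?_⟩, by omega⟩
        intro hmemd
        obtain ⟨j, hj1, hj2⟩ := Set.mem_iUnion.mp hmemd
        rcases le_or_gt j n with hjn | hjn
        · have : K (2 * j + 1) ≤ K (2 * n + 1) := hKmono.monotone (by omega)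
          omega
        · have : K (2 * n + 2) ≤ K (2 * j) := hKmono.monotone (by omega)
          omega
    have h1 : bNum ≤ Cardinal.mk F := csInf_le' ⟨F, rfl, hF⟩
    have h2 : Cardinal.mk F ≤ Cardinal.mk A := Cardinal.mk_image_le
    exact le_trans h1 (hmk ▸ h2)
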